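/- In a Wheeler graph, for any pattern P (a string over the edge-label alphabet), the set of vertices reachable by paths labelled P forms a (possibly empty) contiguous interval in the Wheeler order. -/
import Mathlib


/-- Directed paths from `u` to `w` whose consecutive edge labels spell the list `P`. -/
inductive PathLabelled {V A : Type} (E : V → A → V → Prop) : V → List A → V → Prop
  | nil (v : V) : PathLabelled E v [] v
  | cons {u : V} {a : A} {v w : V} {P : List A} :
      E u a v → PathLabelled E v P w → PathLabelled E u (a :: P) w

lemma PathLabelled.snoc {V A : Type} {E : V → A → V → Prop} {s t u : V} {Q : List A} {a : A}
    (h : PathLabelled E s Q t) (e : E t a u) : PathLabelled E s (Q ++ [a]) u := by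
  induction h with
  | nil v => exact .cons e (.nil u)
  | cons e' _ ih => exact .cons e' (ih e)

lemma PathLabelled.of_snoc {V A : Type} {E : V → A → V → Prop} {s u : V} {Q : List A} {a : A}
    (h : PathLabelled E s (Q ++ [a]) u) : ∃ t, PathLabelled E s Q t ∧ E t a u := by
  induction Q generalizing s with
  | nil =>
    rcases h with _ | ⟨e, h'⟩
    rcases h' with _ | _
    exact ⟨s, .nil s, e⟩
  | cons b Q ih =>
    rcases h with _ | ⟨e, h'⟩
    obtain ⟨t, p, e'⟩ := ih h'
    exact ⟨t, .cons e p, e'⟩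

/-- In a Wheeler graph, the vertices reachable by paths labelled `P` form a
contiguous interval in the Wheeler order. -/
theorem wheeler_reachable_interval {n : ℕ} {A : Type} [LinearOrder A]
    (E : Fin n → A → Fin n → Prop)
    (h1 : ∀ u v : Fin n, (∃ w a, E w a u) → ¬ (∃ w a, E w a v) → v < u)
    (h2 : ∀ (u v : Fin n) (a b : A),
      (∃ w, E w a u) → (∃ w, E w b v) → a < b → u < v)
    (h3 : ∀ (u v w x : Fin n) (a : A), E u a v → E w a x → u < w → v ≤ x)
    (P : List A) (u v w : Fin n) (huv : u ≤ v) (hvw : v ≤ w)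
    (hu : ∃ s, PathLabelled E s P u) (hw : ∃ s, PathLabelled E s P w) :
    ∃ s, PathLabelled E s P v := by
  induction P using List.reverseRecOn generalizing u v w with
  | nil => exact ⟨v, .nil v⟩
  | append_singleton Q a ih =>
    obtain ⟨su, pu⟩ := hu
    obtain ⟨sw, pw⟩ := hw
    obtain ⟨u', pu', eu⟩ := pu.of_snoc
    obtain ⟨w', pw', ew⟩ := pw.of_snoc
    -- v must have an in-edge
    by_cases hv : ∃ x b, E x b v
    · obtain ⟨v₀, b, ev⟩ := hv
      -- its label must be a
      have hba : b = a := by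
        rcases lt_trichotomy b a with hlt | heq | hgt
        · exact absurd (h2 v u b a ⟨v₀, ev⟩ ⟨u', eu⟩ hlt) (not_lt.2 huv)
        · exact heq
        · exact absurd (h2 w v a b ⟨w', ew⟩ ⟨v₀, ev⟩ hgt) (not_lt.2 hvw)
      subst hba
      rcases lt_or_ge v₀ u' with hlt | hge
      · -- then v ≤ u, so v = u
        have : v = u := le_antisymm (h3 v₀ v u' u b ev eu hlt) huv
        exact this ▸ ⟨su, pu⟩
      · rcases le_or_gt v₀ w' with hle | hgt
        · obtain ⟨s, p⟩ := ih u' v₀ w' hge hle ⟨su, pu'⟩ ⟨sw, pw'⟩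
          exact ⟨s, p.snoc ev⟩
        · have : w = v := le_antisymm (h3 w' w v₀ v b ew ev hgt) hvw
          exact this ▸ ⟨sw, pw⟩
    · exact absurd (h1 u v ⟨u', a, eu⟩ hv) (not_lt.2 huv)
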